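/- arXiv:1709.00582 — 2 statements merged into one kernel-verified Lean document; each statement's English description precedes it below -/
import Mathlib

section
/- Moment generating function bound for the largest cluster, zero field (finite-graph version of Proposition 3.4): assume V ≠ ∅; then for every t ≥ 0, E_{P̃_{J,0}}[ exp( t · max_{C a cluster of ω̃} |C| ) ] ≤ 2 · E_{P_{J,0}}[ exp( t · ∑_{v∈V} σ_v ) ]. -/
open scoped Classical

namespace FK

variable {V : Type*} [Fintype V] [DecidableEq V]

/-- Internal bond configurations on the edge set `E`. -/
abbrev Config (E : Finset (Sym2 V)) : Type _ := {e : Sym2 V // e ∈ E} → Bool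

/-- Full bond configurations: internal edges together with the ghost edges
(one for each vertex). -/
abbrev GConfig (E : Finset (Sym2 V)) : Type _ := Config E × (V → Bool)

/-- Two vertices are adjacent if they are distinct and joined by an open internal edge. -/
def adj (E : Finset (Sym2 V)) (ω : Config E) (u v : V) : Prop :=
  u ≠ v ∧ ∃ h : s(u, v) ∈ E, ω ⟨s(u, v), h⟩ = true

/-- The same-cluster relation of an internal configuration. -/
def conn (E : Finset (Sym2 V)) (ω : Config E) (u v : V) : Prop :=
  Relation.ReflTransGen (adj E ω) u v

/-- The cluster of a vertex. -/
noncomputable def cluster (E : Finset (Sym2 V)) (ω : Config E) (v : V) : Finset V :=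
  Finset.univ.filter (fun u => conn E ω v u)

/-- The set of clusters (connected components) of an internal configuration. -/
noncomputable def clusters (E : Finset (Sym2 V)) (ω : Config E) : Finset (Finset V) :=
  Finset.univ.image (cluster E ω)

/-- Adjacency in the extended graph, where `none` is the ghost vertex `g`. -/
def adjG (E : Finset (Sym2 V)) (ω : GConfig E) : Option V → Option V → Prop
  | some u, some v => adj E ω.1 u v
  | some u, none => ω.2 u = true
  | none, some v => ω.2 v = true
  | none, none => False

/-- Connectivity in the extended graph (with the ghost vertex `none`). -/
def connG (E : Finset (Sym2 V)) (ω : GConfig E) (x y : Option V) : Prop :=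
  Relation.ReflTransGen (adjG E ω) x y

/-- Number of connected components of the extended graph not containing the ghost. -/
noncomputable def kGhost (E : Finset (Sym2 V)) (ω : GConfig E) : ℕ :=
  (((Finset.univ : Finset V).filter (fun v => ¬ connG E ω (some v) none)).image
    (fun v => Finset.univ.filter (fun u : V => connG E ω (some v) (some u)))).card

/-- The product over internal edges of the usual FK edge weights. -/
noncomputable def edgeWeight (J : Sym2 V → ℝ) (E : Finset (Sym2 V)) (ω : Config E) : ℝ :=
  ∏ e : {e : Sym2 V // e ∈ E},
    if ω e then 1 - Real.exp (-2 * J e.1) else Real.exp (-2 * J e.1)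

/-- Unnormalized FK (q = 2) weight with ghost. -/
noncomputable def fkWeight (J : Sym2 V → ℝ) (H : V → ℝ) (E : Finset (Sym2 V))
    (ω : GConfig E) : ℝ :=
  2 ^ kGhost E ω * edgeWeight J E ω.1 *
    ∏ v, if ω.2 v then 1 - Real.exp (-2 * H v) else Real.exp (-2 * H v)

/-- The FK (q = 2) random-cluster measure with ghost. -/
noncomputable def fkProb (J : Sym2 V → ℝ) (H : V → ℝ) (E : Finset (Sym2 V))
    (ω : GConfig E) : ℝ :=
  fkWeight J H E ω / ∑ ω' : GConfig E, fkWeight J H E ω'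

/-- The marginal of the FK measure with ghost on the internal edges. -/
noncomputable def fkMarginal (J : Sym2 V → ℝ) (H : V → ℝ) (E : Finset (Sym2 V))
    (ωi : Config E) : ℝ :=
  ∑ ωg : V → Bool, fkProb J H E (ωi, ωg)

/-- Unnormalized zero-field random-cluster (q = 2) weight. -/
noncomputable def rcWeight (J : Sym2 V → ℝ) (E : Finset (Sym2 V)) (ω : Config E) : ℝ :=
  2 ^ (clusters E ω).card * edgeWeight J E ω

/-- The zero-field random-cluster (q = 2) measure. -/
noncomputable def rcProb (J : Sym2 V → ℝ) (E : Finset (Sym2 V)) (ω : Config E) : ℝ :=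
  rcWeight J E ω / ∑ ω' : Config E, rcWeight J E ω'

/-- The spin value (±1) of a Boolean. -/
def spin (b : Bool) : ℝ := if b then 1 else -1

/-- The product of the two spins at the endpoints of an (unordered) edge. -/
def pairSpin (σ : V → Bool) : Sym2 V → ℝ :=
  Sym2.lift ⟨fun u v => spin (σ u) * spin (σ v), fun u v => mul_comm _ _⟩

/-- Unnormalized Ising weight. -/
noncomputable def isingWeight (J : Sym2 V → ℝ) (H : V → ℝ) (E : Finset (Sym2 V))
    (σ : V → Bool) : ℝ :=
  Real.exp ((∑ e ∈ E, J e * pairSpin σ e) + ∑ v, H v * spin (σ v))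

/-- The Ising Gibbs measure. -/
noncomputable def isingProb (J : Sym2 V → ℝ) (H : V → ℝ) (E : Finset (Sym2 V))
    (σ : V → Bool) : ℝ :=
  isingWeight J H E σ / ∑ σ' : V → Bool, isingWeight J H E σ'

/-- Unnormalized Edwards–Sokal weight on pairs (spin configuration, bond configuration
with ghost); the ghost spin is `+1` (i.e. `true`). -/
noncomputable def esWeight (J : Sym2 V → ℝ) (H : V → ℝ) (E : Finset (Sym2 V))
    (p : (V → Bool) × GConfig E) : ℝ :=
  (∏ e : {e : Sym2 V // e ∈ E},
      if p.2.1 e then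
        (if ∀ u ∈ e.1, ∀ v ∈ e.1, p.1 u = p.1 v then 1 - Real.exp (-2 * J e.1) else 0)
      else Real.exp (-2 * J e.1))
  * ∏ v, if p.2.2 v then (if p.1 v = true then 1 - Real.exp (-2 * H v) else 0)
         else Real.exp (-2 * H v)

/-- The Edwards–Sokal coupling measure. -/
noncomputable def esProb (J : Sym2 V → ℝ) (H : V → ℝ) (E : Finset (Sym2 V))
    (p : (V → Bool) × GConfig E) : ℝ :=
  esWeight J H E p / ∑ p' : (V → Bool) × GConfig E, esWeight J H E p'

end FK

namespace FKAux

open FK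

variable {V : Type*} [Fintype V] [DecidableEq V]

/-- Agreement of spins on an (unordered) edge. -/
def agree (σ : V → Bool) (e : Sym2 V) : Prop := ∀ u ∈ e, ∀ v ∈ e, σ u = σ v

lemma agree_mk {σ : V → Bool} {a b : V} : agree σ s(a, b) ↔ σ a = σ b := by
  constructor
  · intro h; exact h a (by simp) b (by simp)
  · intro h u hu v hv
    rw [Sym2.mem_iff] at hu hv
    rcases hu with rfl | rfl <;> rcases hv with rfl | rfl
    · rfl
    · exact h
    · exact h.symm
    · rfl

/-- The zero-field Edwards–Sokal joint weight. -/
noncomputable def w (E : Finset (Sym2 V)) (J : Sym2 V → ℝ) (ω : Config E) (σ : V → Bool) : ℝ :=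
  ∏ e : {e : Sym2 V // e ∈ E},
    if ω e then (if agree σ e.1 then 1 - Real.exp (-2 * J e.1) else 0)
    else Real.exp (-2 * J e.1)

lemma sum_w_over_omega (E : Finset (Sym2 V)) (J : Sym2 V → ℝ) (σ : V → Bool) :
    ∑ ω : Config E, w E J ω σ
      = ∏ e : {e : Sym2 V // e ∈ E}, (if agree σ e.1 then 1 else Real.exp (-2 * J e.1)) := by
  rw [eq_comm]
  have h1 : ∀ e : {e : Sym2 V // e ∈ E},
      (if agree σ e.1 then (1 : ℝ) else Real.exp (-2 * J e.1))
        = ∑ b : Bool, (if b then (if agree σ e.1 then 1 - Real.exp (-2 * J e.1) else 0)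
            else Real.exp (-2 * J e.1)) := by
    intro e
    rw [Fintype.sum_bool]
    by_cases h : agree σ e.1 <;> simp [h] <;> ring
  calc ∏ e : {e : Sym2 V // e ∈ E}, (if agree σ e.1 then (1 : ℝ) else Real.exp (-2 * J e.1))
      = ∏ e : {e : Sym2 V // e ∈ E}, ∑ b : Bool,
          (if b then (if agree σ e.1 then 1 - Real.exp (-2 * J e.1) else 0)
            else Real.exp (-2 * J e.1)) := Finset.prod_congr rfl (fun e _ => h1 e)
    _ = ∑ ω : Config E, w E J ω σ := Fintype.prod_sum _

lemma agree_factor (J : Sym2 V → ℝ) (σ : V → Bool) (e : Sym2 V) :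
    (if agree σ e then (1 : ℝ) else Real.exp (-2 * J e))
      = Real.exp (-J e) * Real.exp (J e * pairSpin σ e) := by
  induction e using Sym2.inductionOn with
  | hf a b =>
    by_cases h : σ a = σ b
    · rw [if_pos (agree_mk.mpr h)]
      have hps : pairSpin σ s(a, b) = 1 := by
        simp only [pairSpin, Sym2.lift_mk]
        cases ha : σ a <;> cases hb : σ b <;> simp_all [spin]
      rw [hps, ← Real.exp_add]
      norm_num
    · rw [if_neg (fun hh => h (agree_mk.mp hh))]
      have hps : pairSpin σ s(a, b) = -1 := by
        simp only [pairSpin, Sym2.lift_mk]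
        cases ha : σ a <;> cases hb : σ b <;> simp_all [spin]
      rw [hps, ← Real.exp_add]
      ring_nf

lemma sum_w_eq_ising (E : Finset (Sym2 V)) (J : Sym2 V → ℝ) (σ : V → Bool) :
    ∑ ω : Config E, w E J ω σ
      = Real.exp (-∑ e ∈ E, J e) * isingWeight J (fun _ => 0) E σ := by
  rw [sum_w_over_omega]
  have h1 : ∏ e : {e : Sym2 V // e ∈ E}, (if agree σ e.1 then (1 : ℝ) else Real.exp (-2 * J e.1))
      = ∏ e ∈ E, (if agree σ e then (1 : ℝ) else Real.exp (-2 * J e)) :=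
    (Finset.prod_subtype E (fun _ => Iff.rfl) (fun e => if agree σ e then (1 : ℝ) else Real.exp (-2 * J e))).symm
  rw [h1, Finset.prod_congr rfl (fun e _ => agree_factor J σ e), Finset.prod_mul_distrib,
    ← Real.exp_sum, ← Real.exp_sum]
  have : ∑ e ∈ E, -J e = -∑ e ∈ E, J e := by rw [Finset.sum_neg_distrib]
  rw [this]
  congr 1
  unfold isingWeight
  simp

section ConnStuff

variable (E : Finset (Sym2 V)) (ω : Config E)

lemma adj_symm : Symmetric (adj E ω) := by
  intro u v h
  obtain ⟨hne, he, hop⟩ := h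
  refine ⟨hne.symm, ?_⟩
  rw [Sym2.eq_swap]
  exact ⟨he, hop⟩

lemma conn_symm : Symmetric (conn E ω) :=
  by
    haveI : Std.Symm (adj E ω) := ⟨fun a b h => adj_symm E ω h⟩
    exact fun a b h => Std.Symm.symm (r := Relation.ReflTransGen (adj E ω)) a b h

/-- The connectivity setoid. -/
def cs : Setoid V :=
  ⟨conn E ω, ⟨fun _ => Relation.ReflTransGen.refl, fun h => conn_symm E ω h,
    fun h h' => Relation.ReflTransGen.trans h h'⟩⟩

noncomputable instance : Fintype (Quotient (cs E ω)) := by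
  classical exact Quotient.fintype _

lemma cluster_eq_of_conn {u v : V} (h : conn E ω u v) : cluster E ω u = cluster E ω v := by
  ext x
  simp only [cluster, Finset.mem_filter, Finset.mem_univ, true_and]
  exact ⟨fun hx => Relation.ReflTransGen.trans (conn_symm E ω h) hx,
    fun hx => Relation.ReflTransGen.trans h hx⟩

/-- The cluster of an equivalence class. -/
noncomputable def phi : Quotient (cs E ω) → Finset V :=
  Quotient.lift (cluster E ω) (fun _ _ h => cluster_eq_of_conn E ω h)

lemma mem_cluster_self (v : V) : v ∈ cluster E ω v := by
  simp only [cluster, Finset.mem_filter, Finset.mem_univ, true_and]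
  exact Relation.ReflTransGen.refl

lemma phi_inj : Function.Injective (phi E ω) := by
  intro q₁ q₂ h
  induction q₁ using Quotient.inductionOn with | h u =>
  induction q₂ using Quotient.inductionOn with | h v =>
  apply Quotient.sound
  have hv : v ∈ cluster E ω u := by
    rw [show cluster E ω u = cluster E ω v from h]
    exact mem_cluster_self E ω v
  simp only [cluster, Finset.mem_filter] at hv
  exact hv.2

lemma clusters_eq_image : clusters E ω = Finset.univ.image (phi E ω) := by
  unfold clusters
  ext C
  simp only [Finset.mem_image, Finset.mem_univ, true_and]
  constructor
  · rintro ⟨v, rfl⟩; exact ⟨⟦v⟧, rfl⟩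
  · rintro ⟨q, rfl⟩
    induction q using Quotient.inductionOn with | h v =>
    exact ⟨v, rfl⟩

lemma card_clusters : (clusters E ω).card = Fintype.card (Quotient (cs E ω)) := by
  rw [clusters_eq_image, Finset.card_image_of_injective _ (phi_inj E ω), Finset.card_univ]

/-- Size of a cluster, indexed by the quotient. -/
noncomputable def csize (q : Quotient (cs E ω)) : ℕ := (phi E ω q).card

lemma fiber_eq (q : Quotient (cs E ω)) :
    Finset.univ.filter (fun v : V => (⟦v⟧ : Quotient (cs E ω)) = q) = phi E ω q := by
  induction q using Quotient.inductionOn with | h u =>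
  ext v
  simp only [Finset.mem_filter, Finset.mem_univ, true_and, phi, Quotient.lift_mk, cluster]
  rw [Quotient.eq'']
  exact ⟨fun h => conn_symm E ω h, fun h => conn_symm E ω h⟩

lemma sum_spin_comp (f : Quotient (cs E ω) → Bool) :
    ∑ v : V, spin (f ⟦v⟧) = ∑ q : Quotient (cs E ω), (csize E ω q : ℝ) * spin (f q) := by
  rw [← Finset.sum_fiberwise Finset.univ (fun v : V => (⟦v⟧ : Quotient (cs E ω)))
    (fun v => spin (f ⟦v⟧))]
  refine Finset.sum_congr rfl fun q _ => ?_
  have h1 : ∀ v ∈ Finset.univ.filter (fun v : V => (⟦v⟧ : Quotient (cs E ω)) = q),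
      spin (f ⟦v⟧) = spin (f q) := fun v hv => by
    rw [(Finset.mem_filter.mp hv).2]
  rw [Finset.sum_congr rfl h1, Finset.sum_const, fiber_eq, nsmul_eq_mul]
  rfl

/-- Conn-invariance of a spin configuration. -/
def CI (σ : V → Bool) : Prop := ∀ u v : V, conn E ω u v → σ u = σ v

lemma CI_iff (hE : ∀ e ∈ E, ¬ e.IsDiag) (σ : V → Bool) :
    CI E ω σ ↔ ∀ e : {e : Sym2 V // e ∈ E}, ω e = true → agree σ e.1 := by
  constructor
  · rintro h ⟨e, he⟩ hop
    induction e using Sym2.inductionOn with | hf a b =>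
    have hab : a ≠ b := fun hh => hE _ he (by simp [hh])
    have : conn E ω a b := Relation.ReflTransGen.single ⟨hab, he, hop⟩
    exact agree_mk.mpr (h a b this)
  · intro h u v hc
    induction hc with
    | refl => rfl
    | tail _ hadj ih =>
      rename_i x y _
      obtain ⟨hne, he, hop⟩ := hadj
      exact ih.trans (agree_mk.mp (h ⟨s(x, y), he⟩ hop))

lemma w_eq_indicator (J : Sym2 V → ℝ) (hE : ∀ e ∈ E, ¬ e.IsDiag) (σ : V → Bool) :
    w E J ω σ = (if CI E ω σ then 1 else 0) * edgeWeight J E ω := by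
  by_cases h : CI E ω σ
  · rw [if_pos h, one_mul]
    refine Finset.prod_congr rfl fun e _ => ?_
    by_cases hb : ω e
    · rw [if_pos hb, if_pos hb, if_pos ((CI_iff E ω hE σ).mp h e hb)]
    · rw [if_neg hb, if_neg hb]
  · rw [if_neg h, zero_mul]
    rw [CI_iff E ω hE σ] at h
    push_neg at h
    obtain ⟨e, hop, hna⟩ := h
    refine Finset.prod_eq_zero (Finset.mem_univ e) ?_
    rw [if_pos hop, if_neg hna]

/-- Spin configurations constant on clusters correspond to functions on the quotient. -/
noncomputable def ciEquiv : (Quotient (cs E ω) → Bool) ≃ {σ : V → Bool // CI E ω σ} where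
  toFun f := ⟨fun v => f ⟦v⟧, fun u v h => by
    show f ⟦u⟧ = f ⟦v⟧
    exact congrArg f (Quotient.sound h)⟩
  invFun σ := Quotient.lift σ.1 (fun u v h => σ.2 u v h)
  left_inv f := by
    funext q
    induction q using Quotient.inductionOn with | h v =>
    rfl
  right_inv σ := rfl

lemma sum_CI (g : (V → Bool) → ℝ) :
    ∑ σ : V → Bool, (if CI E ω σ then 1 else 0) * g σ
      = ∑ f : Quotient (cs E ω) → Bool, g (fun v => f ⟦v⟧) := by
  have h1 : ∀ σ : V → Bool, (if CI E ω σ then (1:ℝ) else 0) * g σ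
      = if CI E ω σ then g σ else 0 := by
    intro σ; by_cases h : CI E ω σ <;> simp [h]
  rw [Finset.sum_congr rfl (fun σ _ => h1 σ), ← Finset.sum_filter,
    Finset.sum_subtype (p := CI E ω) _ (fun x => by simp) g]
  exact (Fintype.sum_equiv (ciEquiv E ω) (fun f => g (fun v => f ⟦v⟧))
    (fun σ => g σ.1) (fun f => rfl)).symm

end ConnStuff

section Main

variable (E : Finset (Sym2 V)) (ω : Config E)

lemma sum_CI_exp (t : ℝ) :
    ∑ σ : V → Bool, (if CI E ω σ then (1 : ℝ) else 0) * Real.exp (t * ∑ v, spin (σ v))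
      = ∏ q : Quotient (cs E ω),
          (Real.exp (t * csize E ω q) + Real.exp (-(t * csize E ω q))) := by
  rw [sum_CI E ω (fun σ => Real.exp (t * ∑ v, spin (σ v)))]
  have h1 : ∀ f : Quotient (cs E ω) → Bool,
      Real.exp (t * ∑ v, spin (f ⟦v⟧))
        = ∏ q : Quotient (cs E ω), Real.exp (t * csize E ω q * spin (f q)) := by
    intro f
    rw [sum_spin_comp, Finset.mul_sum, Real.exp_sum]
    exact Finset.prod_congr rfl fun q _ => by rw [mul_assoc]
  rw [Finset.sum_congr rfl (fun f _ => h1 f)]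
  have h2 := Fintype.prod_sum (f := fun (q : Quotient (cs E ω)) (b : Bool) =>
    Real.exp (t * csize E ω q * spin b))
  rw [← h2]
  refine Finset.prod_congr rfl fun q _ => ?_
  rw [Fintype.sum_bool]
  simp [spin, mul_one, mul_neg_one]

lemma key_ineq [Nonempty V] {t : ℝ} (ht : 0 ≤ t) :
    (2 : ℝ) ^ (clusters E ω).card
        * Real.exp (t * (((clusters E ω).sup Finset.card : ℕ) : ℝ))
      ≤ 2 * ∏ q : Quotient (cs E ω),
          (Real.exp (t * csize E ω q) + Real.exp (-(t * csize E ω q))) := by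
  haveI : Nonempty (Quotient (cs E ω)) := ⟨⟦Classical.arbitrary V⟧⟩
  obtain ⟨q₀, -, hq₀⟩ := Finset.exists_max_image Finset.univ (csize E ω) Finset.univ_nonempty
  have hM : (clusters E ω).sup Finset.card = csize E ω q₀ := by
    rw [clusters_eq_image, Finset.sup_image]
    refine le_antisymm (Finset.sup_le fun q _ => hq₀ q (Finset.mem_univ q)) ?_
    exact Finset.le_sup (f := Finset.card ∘ phi E ω) (Finset.mem_univ q₀)
  set F : Quotient (cs E ω) → ℝ :=
    fun q => Real.exp (t * csize E ω q) + Real.exp (-(t * csize E ω q)) with hF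
  have hF2 : ∀ q, (2 : ℝ) ≤ F q := by
    intro q
    have h1 := Real.add_one_le_exp (t * csize E ω q)
    have h2 := Real.add_one_le_exp (-(t * csize E ω q))
    simp only [hF]; linarith
  have hprod : ∏ q, F q = F q₀ * ∏ q ∈ Finset.univ.erase q₀, F q :=
    (Finset.mul_prod_erase Finset.univ F (Finset.mem_univ q₀)).symm
  have h2 : (2 : ℝ) ^ (Finset.univ.erase q₀).card ≤ ∏ q ∈ Finset.univ.erase q₀, F q := by
    rw [← Finset.prod_const]
    exact Finset.prod_le_prod (fun _ _ => by norm_num) (fun q _ => hF2 q)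
  have hFq₀ : Real.exp (t * csize E ω q₀) ≤ F q₀ := le_add_of_nonneg_right (Real.exp_nonneg _)
  have hcard : Fintype.card (Quotient (cs E ω)) = (Finset.univ.erase q₀).card + 1 := by
    rw [Finset.card_erase_of_mem (Finset.mem_univ q₀), Finset.card_univ]
    have : 1 ≤ Fintype.card (Quotient (cs E ω)) := Fintype.card_pos
    omega
  calc (2 : ℝ) ^ (clusters E ω).card
        * Real.exp (t * (((clusters E ω).sup Finset.card : ℕ) : ℝ))
      = 2 * ((2 : ℝ) ^ (Finset.univ.erase q₀).card * Real.exp (t * csize E ω q₀)) := by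
        rw [hM, card_clusters, hcard, pow_succ]
        ring
    _ ≤ 2 * ((∏ q ∈ Finset.univ.erase q₀, F q) * F q₀) := by
        have hmul := mul_le_mul h2 hFq₀ (Real.exp_nonneg _)
          (le_trans (by positivity) h2)
        linarith
    _ = 2 * ∏ q, F q := by rw [hprod]; ring

lemma edgeWeight_nonneg (J : Sym2 V → ℝ) (hJ : ∀ e ∈ E, 0 ≤ J e) :
    0 ≤ edgeWeight J E ω := by
  unfold edgeWeight
  apply Finset.prod_nonneg
  intro e _
  by_cases hb : ω e
  · rw [if_pos hb]
    have h1 : Real.exp (-2 * J e.1) ≤ 1 := by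
      rw [Real.exp_le_one_iff]
      have := hJ e.1 e.2
      linarith
    linarith
  · rw [if_neg hb]; exact Real.exp_nonneg _

lemma sum_w_sigma (J : Sym2 V → ℝ) (hE : ∀ e ∈ E, ¬ e.IsDiag) :
    ∑ σ : V → Bool, w E J ω σ = rcWeight J E ω := by
  rw [Finset.sum_congr rfl (fun σ _ => w_eq_indicator E ω J hE σ), ← Finset.sum_mul]
  have h1 : ∑ σ : V → Bool, (if CI E ω σ then (1 : ℝ) else 0)
      = (2 : ℝ) ^ (clusters E ω).card := by
    have h2 : ∑ σ : V → Bool, (if CI E ω σ then (1 : ℝ) else 0)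
        = ∑ σ : V → Bool, (if CI E ω σ then (1 : ℝ) else 0) * (fun _ => (1:ℝ)) σ := by
      simp
    rw [h2, sum_CI E ω (fun _ => (1 : ℝ)), Finset.sum_const, Finset.card_univ, nsmul_eq_mul,
      mul_one, Fintype.card_fun, Fintype.card_bool, card_clusters]
    push_cast
    rfl
  rw [h1]
  rfl

lemma per_omega (J : Sym2 V → ℝ) (hE : ∀ e ∈ E, ¬ e.IsDiag) (hJ : ∀ e ∈ E, 0 ≤ J e)
    [Nonempty V] {t : ℝ} (ht : 0 ≤ t) :
    rcWeight J E ω * Real.exp (t * (((clusters E ω).sup Finset.card : ℕ) : ℝ))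
      ≤ 2 * ∑ σ : V → Bool, w E J ω σ * Real.exp (t * ∑ v, spin (σ v)) := by
  have hsum : ∑ σ : V → Bool, w E J ω σ * Real.exp (t * ∑ v, spin (σ v))
      = edgeWeight J E ω * ∏ q : Quotient (cs E ω),
          (Real.exp (t * csize E ω q) + Real.exp (-(t * csize E ω q))) := by
    have h1 : ∀ σ : V → Bool, w E J ω σ * Real.exp (t * ∑ v, spin (σ v))
        = ((if CI E ω σ then (1 : ℝ) else 0) * Real.exp (t * ∑ v, spin (σ v)))
            * edgeWeight J E ω := by
      intro σ; rw [w_eq_indicator E ω J hE σ]; ring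
    rw [Finset.sum_congr rfl (fun σ _ => h1 σ), ← Finset.sum_mul, sum_CI_exp, mul_comm]
  rw [hsum]
  have hkey := key_ineq E ω (t := t) ht
  have hew := edgeWeight_nonneg E ω J hJ
  unfold rcWeight
  calc (2 : ℝ) ^ (clusters E ω).card * edgeWeight J E ω
        * Real.exp (t * (((clusters E ω).sup Finset.card : ℕ) : ℝ))
      = ((2 : ℝ) ^ (clusters E ω).card
          * Real.exp (t * (((clusters E ω).sup Finset.card : ℕ) : ℝ))) * edgeWeight J E ω := by
        ring
    _ ≤ (2 * ∏ q : Quotient (cs E ω),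
          (Real.exp (t * csize E ω q) + Real.exp (-(t * csize E ω q)))) * edgeWeight J E ω :=
        mul_le_mul_of_nonneg_right hkey hew
    _ = 2 * (edgeWeight J E ω * ∏ q : Quotient (cs E ω),
          (Real.exp (t * csize E ω q) + Real.exp (-(t * csize E ω q)))) := by ring

end Main

end FKAux

set_option maxHeartbeats 1000000 in
/-- moment generating function bound for the largest cluster, zero field. -/
theorem mgf_largest_cluster_zero_field
    {V : Type*} [Fintype V] [DecidableEq V] [Nonempty V]
    (E : Finset (Sym2 V)) (hE : ∀ e ∈ E, ¬ e.IsDiag)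
    (J : Sym2 V → ℝ) (hJ : ∀ e ∈ E, 0 ≤ J e)
    (t : ℝ) (ht : 0 ≤ t) :
    (∑ ωi : FK.Config E, FK.rcProb J E ωi *
        Real.exp (t * (((FK.clusters E ωi).sup Finset.card : ℕ) : ℝ)))
      ≤ 2 * ∑ σ : V → Bool, FK.isingProb J (fun _ => 0) E σ *
            Real.exp (t * ∑ v, FK.spin (σ v)) := by
  classical
  set c := Real.exp (-∑ e ∈ E, J e) with hc
  have hc0 : 0 < c := Real.exp_pos _
  set Zis := ∑ σ : V → Bool, FK.isingWeight J (fun _ => 0) E σ with hZis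
  have hZis0 : 0 < Zis := Finset.sum_pos (fun σ _ => Real.exp_pos _) Finset.univ_nonempty
  have hZrc : ∑ ω : FK.Config E, FK.rcWeight J E ω = c * Zis := by
    rw [Finset.sum_congr rfl (fun ω _ => (FKAux.sum_w_sigma E ω J hE).symm), Finset.sum_comm,
      Finset.sum_congr rfl (fun σ _ => FKAux.sum_w_eq_ising E J σ), ← Finset.mul_sum]
  have hZrc0 : 0 < ∑ ω : FK.Config E, FK.rcWeight J E ω := by
    rw [hZrc]
    exact mul_pos hc0 hZis0
  -- numerator bound
  have hnum : ∑ ω : FK.Config E, FK.rcWeight J E ω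
        * Real.exp (t * (((FK.clusters E ω).sup Finset.card : ℕ) : ℝ))
      ≤ 2 * c * ∑ σ : V → Bool, FK.isingWeight J (fun _ => 0) E σ
          * Real.exp (t * ∑ v, FK.spin (σ v)) := by
    calc ∑ ω : FK.Config E, FK.rcWeight J E ω
          * Real.exp (t * (((FK.clusters E ω).sup Finset.card : ℕ) : ℝ))
        ≤ ∑ ω : FK.Config E, 2 * ∑ σ : V → Bool,
            FKAux.w E J ω σ * Real.exp (t * ∑ v, FK.spin (σ v)) :=
          Finset.sum_le_sum (fun ω _ => FKAux.per_omega E ω J hE hJ ht)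
      _ = 2 * ∑ σ : V → Bool, (∑ ω : FK.Config E, FKAux.w E J ω σ)
            * Real.exp (t * ∑ v, FK.spin (σ v)) := by
          rw [← Finset.mul_sum, Finset.sum_comm]
          congr 1
          exact Finset.sum_congr rfl fun σ _ => (Finset.sum_mul _ _ _).symm
      _ = 2 * c * ∑ σ : V → Bool, FK.isingWeight J (fun _ => 0) E σ
            * Real.exp (t * ∑ v, FK.spin (σ v)) := by
          rw [Finset.sum_congr rfl (fun σ _ => by rw [FKAux.sum_w_eq_ising E J σ])]
          rw [Finset.mul_sum, Finset.mul_sum]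
          exact Finset.sum_congr rfl fun σ _ => by ring
  -- rewrite both sides as quotients
  have hL : ∑ ωi : FK.Config E, FK.rcProb J E ωi
        * Real.exp (t * (((FK.clusters E ωi).sup Finset.card : ℕ) : ℝ))
      = (∑ ω : FK.Config E, FK.rcWeight J E ω
          * Real.exp (t * (((FK.clusters E ω).sup Finset.card : ℕ) : ℝ)))
        / (c * Zis) := by
    rw [Finset.sum_div]
    exact Finset.sum_congr rfl fun ω _ => by rw [FK.rcProb, hZrc, div_mul_eq_mul_div]
  have hR : ∑ σ : V → Bool, FK.isingProb J (fun _ => 0) E σ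
        * Real.exp (t * ∑ v, FK.spin (σ v))
      = (∑ σ : V → Bool, FK.isingWeight J (fun _ => 0) E σ
          * Real.exp (t * ∑ v, FK.spin (σ v))) / Zis := by
    rw [Finset.sum_div]
    exact Finset.sum_congr rfl fun σ _ => by rw [FK.isingProb, ← hZis, div_mul_eq_mul_div]
  rw [hL, hR]
  rw [div_le_iff₀ (mul_pos hc0 hZis0)]
  have h2 : 2 * ((∑ σ : V → Bool, FK.isingWeight J (fun _ => 0) E σ
      * Real.exp (t * ∑ v, FK.spin (σ v))) / Zis) * (c * Zis)
      = 2 * c * ∑ σ : V → Bool, FK.isingWeight J (fun _ => 0) E σ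
          * Real.exp (t * ∑ v, FK.spin (σ v)) := by
    field_simp
  rw [h2]
  exact hnum
end

section
/- Radon–Nikodym derivative for the random-cluster model with general cluster weight q > 0 (finite-graph version of the Remark at the end of the Appendix): for every internal configuration ω̃ ∈ {0,1}^E, P̃^q_{J,H}(ω̃) = P̃^q_{J,0}(ω̃) · ( ∏_{C a cluster of ω̃} [ (2/q)·cosh(H(C)) + ((q−2)/q)·e^{−H(C)} ] ) / E_{P̃^q_{J,0}}[ ∏_{C a cluster of ·} ( (2/q)·cosh(H(C)) + ((q−2)/q)·e^{−H(C)} ) ]. -/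
open scoped Classical

namespace FK

variable {V : Type*} [Fintype V] [DecidableEq V]

/-- Unnormalized random-cluster weight with ghost, general cluster weight `q`. -/
noncomputable def fkWeightQ (q : ℝ) (J : Sym2 V → ℝ) (H : V → ℝ) (E : Finset (Sym2 V))
    (ω : GConfig E) : ℝ :=
  q ^ kGhost E ω * edgeWeight J E ω.1 *
    ∏ v, if ω.2 v then 1 - Real.exp (-2 * H v) else Real.exp (-2 * H v)

/-- The random-cluster measure with ghost, general cluster weight `q`. -/
noncomputable def fkProbQ (q : ℝ) (J : Sym2 V → ℝ) (H : V → ℝ) (E : Finset (Sym2 V))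
    (ω : GConfig E) : ℝ :=
  fkWeightQ q J H E ω / ∑ ω' : GConfig E, fkWeightQ q J H E ω'

/-- The marginal on internal edges of the random-cluster measure with ghost,
general cluster weight `q`. -/
noncomputable def fkMarginalQ (q : ℝ) (J : Sym2 V → ℝ) (H : V → ℝ) (E : Finset (Sym2 V))
    (ωi : Config E) : ℝ :=
  ∑ ωg : V → Bool, fkProbQ q J H E (ωi, ωg)

/-- Unnormalized zero-field random-cluster weight, general cluster weight `q`. -/
noncomputable def rcWeightQ (q : ℝ) (J : Sym2 V → ℝ) (E : Finset (Sym2 V))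
    (ω : Config E) : ℝ :=
  q ^ (clusters E ω).card * edgeWeight J E ω

/-- The zero-field random-cluster measure, general cluster weight `q`. -/
noncomputable def rcProbQ (q : ℝ) (J : Sym2 V → ℝ) (E : Finset (Sym2 V))
    (ω : Config E) : ℝ :=
  rcWeightQ q J E ω / ∑ ω' : Config E, rcWeightQ q J E ω'

end FK


namespace FK

set_option linter.unusedSectionVars false

variable {V : Type*} [Fintype V] [DecidableEq V] {E : Finset (Sym2 V)}

lemma adj_symm (ω : Config E) {u v : V} (h : adj E ω u v) : adj E ω v u := by
  obtain ⟨hne, he, hω⟩ := h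
  refine ⟨hne.symm, ?_⟩
  have hs : s(v, u) = s(u, v) := Sym2.eq_swap
  rw [hs]
  exact ⟨he, hω⟩

lemma conn_symm (ω : Config E) {u v : V} (h : conn E ω u v) : conn E ω v u :=
  haveI : Std.Symm (adj E ω) := ⟨fun _ _ h => adj_symm ω h⟩
  Relation.ReflTransGen.symmetric.symm _ _ h

lemma mem_cluster {ω : Config E} {u v : V} : u ∈ cluster E ω v ↔ conn E ω v u := by
  simp [cluster]

lemma cluster_eq_of_conn {ω : Config E} {u v : V} (h : conn E ω v u) :
    cluster E ω v = cluster E ω u := by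
  ext w
  simp only [mem_cluster]
  exact ⟨fun h2 => (conn_symm ω h).trans h2, fun h2 => h.trans h2⟩

lemma mem_cluster_self (ω : Config E) (v : V) : v ∈ cluster E ω v :=
  mem_cluster.2 Relation.ReflTransGen.refl

lemma clusters_disjoint (ω : Config E) :
    (↑(clusters E ω) : Set (Finset V)).PairwiseDisjoint id := by
  intro C hC D hD hne
  simp only [clusters, Finset.coe_image, Set.mem_image] at hC hD
  obtain ⟨v, -, rfl⟩ := hC
  obtain ⟨u, -, rfl⟩ := hD
  simp only [Function.onFun, id]
  rw [Finset.disjoint_left]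
  intro w hw hw'
  rw [mem_cluster] at hw hw'
  exact hne (by rw [cluster_eq_of_conn hw, cluster_eq_of_conn hw'])

lemma clusters_biUnion (ω : Config E) : (clusters E ω).biUnion id = Finset.univ := by
  ext v
  simp only [Finset.mem_biUnion, Finset.mem_univ, iff_true, id]
  exact ⟨cluster E ω v, Finset.mem_image_of_mem _ (Finset.mem_univ v), mem_cluster_self ω v⟩

lemma sum_clusters (ω : Config E) (g : V → ℝ) :
    ∑ C ∈ clusters E ω, ∑ v ∈ C, g v = ∑ v, g v := by
  conv_rhs => rw [← clusters_biUnion ω]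
  rw [Finset.sum_biUnion (clusters_disjoint ω)]
  simp only [id]

lemma connG_aux (ω : GConfig E) (v : V) :
    ∀ x, connG E ω (some v) x →
      (x.elim (∃ w, conn E ω.1 v w ∧ ω.2 w = true)
        (fun u => conn E ω.1 v u ∨ ∃ w, conn E ω.1 v w ∧ ω.2 w = true)) := by
  intro x h
  induction h with
  | refl => exact Or.inl Relation.ReflTransGen.refl
  | tail hab hbc ih =>
    rename_i b c
    match b, c, hbc, ih with
    | some u, some w, hbc, ih =>
        rcases ih with h1 | h1
        · exact Or.inl (h1.tail hbc)
        · exact Or.inr h1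
    | some u, none, hbc, ih =>
        rcases ih with h1 | h1
        · exact ⟨u, h1, hbc⟩
        · exact h1
    | none, some w, hbc, ih => exact Or.inr ih
    | none, none, hbc, _ => exact hbc.elim

lemma conn_connG (ω : GConfig E) {u v : V} (h : conn E ω.1 u v) :
    connG E ω (some u) (some v) :=
  Relation.ReflTransGen.lift some (fun _ _ h => h) _ _ h

lemma connG_some_none_iff (ω : GConfig E) (v : V) :
    connG E ω (some v) none ↔ ∃ w, conn E ω.1 v w ∧ ω.2 w = true := by
  constructor
  · intro h; exact connG_aux ω v none h
  · rintro ⟨w, hc, hw⟩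
    exact (conn_connG ω hc).tail hw

lemma connG_some_some_iff (ω : GConfig E) {v : V}
    (hv : ¬ ∃ w, conn E ω.1 v w ∧ ω.2 w = true) (u : V) :
    connG E ω (some v) (some u) ↔ conn E ω.1 v u := by
  constructor
  · intro h
    rcases connG_aux ω v (some u) h with h1 | h1
    · exact h1
    · exact absurd h1 hv
  · exact conn_connG ω

lemma kGhost_eq (ωi : Config E) (ωg : V → Bool) :
    kGhost E (ωi, ωg) =
      ((clusters E ωi).filter (fun C => ∀ v ∈ C, ωg v = false)).card := by
  unfold kGhost
  congr 1
  have h1 : (Finset.univ : Finset V).filter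
      (fun v => ¬ connG E (ωi, ωg) (some v) none) =
      Finset.univ.filter (fun v => ¬ ∃ w, conn E ωi v w ∧ ωg w = true) := by
    apply Finset.filter_congr
    intro v _
    rw [connG_some_none_iff]
  rw [h1]
  rw [Finset.image_congr (g := cluster E ωi) ?_]
  · ext C
    simp only [Finset.mem_image, Finset.mem_filter, Finset.mem_univ, true_and, clusters]
    constructor
    · rintro ⟨v, hv, rfl⟩
      refine ⟨⟨v, rfl⟩, ?_⟩
      intro u hu
      rw [mem_cluster] at hu
      by_contra hne
      exact hv ⟨u, hu, by simpa using hne⟩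
    · rintro ⟨⟨v, -, rfl⟩, hall⟩
      refine ⟨v, ?_, rfl⟩
      rintro ⟨w, hc, hw⟩
      have := hall w (mem_cluster.2 hc)
      rw [this] at hw
      exact Bool.false_ne_true hw
  · intro v hv
    simp only [Finset.coe_filter, Finset.mem_univ, true_and, Set.mem_setOf_eq] at hv
    ext u
    simp only [Finset.mem_filter, Finset.mem_univ, true_and, cluster]
    exact connG_some_some_iff (ωi, ωg) hv u

lemma sum_ghost (q : ℝ) (J : Sym2 V → ℝ) (H : V → ℝ) (ωi : Config E) :
    ∑ ωg : V → Bool, fkWeightQ q J H E (ωi, ωg)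
      = edgeWeight J E ωi *
        ∏ C ∈ clusters E ωi, (1 + (q - 1) * Real.exp (-2 * ∑ v ∈ C, H v)) := by
  classical
  set K := clusters E ωi with hK
  set W := edgeWeight J E ωi with hW
  set Fb : Finset (Finset V) → V → Bool → ℝ := fun t v b =>
    (if v ∈ t.biUnion id then (if b then 0 else 1) else 1) *
      (if b then 1 - Real.exp (-2 * H v) else Real.exp (-2 * H v)) with hFb
  have key : ∀ ωg : V → Bool,
      fkWeightQ q J H E (ωi, ωg)
        = W * ∑ t ∈ K.powerset, (q - 1) ^ t.card * ∏ v, Fb t v (ωg v) := by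
    intro ωg
    have hunf : fkWeightQ q J H E (ωi, ωg) =
        q ^ kGhost E (ωi, ωg) * W *
          ∏ v, (if ωg v then 1 - Real.exp (-2 * H v) else Real.exp (-2 * H v)) := rfl
    rw [hunf, kGhost_eq]
    have h1 : (q : ℝ) ^ ((K.filter (fun C => ∀ v ∈ C, ωg v = false)).card) =
        ∑ t ∈ K.powerset, (q - 1) ^ t.card *
          (if ∀ v ∈ t.biUnion id, ωg v = false then (1:ℝ) else 0) := by
      have e1 : (q : ℝ) ^ ((K.filter (fun C => ∀ v ∈ C, ωg v = false)).card) =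
          ∏ C ∈ K, (if ∀ v ∈ C, ωg v = false then q else 1) := by
        rw [Finset.prod_ite, Finset.prod_const, Finset.prod_const_one, mul_one]
      rw [e1]
      have e2 : ∀ C ∈ K, (if ∀ v ∈ C, ωg v = false then q else (1:ℝ)) =
          (q - 1) * (if ∀ v ∈ C, ωg v = false then (1:ℝ) else 0) + 1 := by
        intro C _
        split <;> ring
      rw [Finset.prod_congr rfl e2, Finset.prod_add]
      refine Finset.sum_congr rfl fun t ht => ?_
      rw [Finset.prod_const_one, mul_one, Finset.prod_mul_distrib, Finset.prod_const,
        Finset.prod_boole]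
      have hiff : (∀ i ∈ t, ∀ v ∈ i, ωg v = false) ↔
          (∀ v ∈ t.biUnion id, ωg v = false) := by
        simp only [Finset.mem_biUnion, id]
        constructor
        · rintro h v ⟨C, hC, hv⟩; exact h C hC v hv
        · intro h C hC v hv; exact h v ⟨C, hC, hv⟩
      simp only [hiff]
    rw [h1, Finset.sum_mul, Finset.sum_mul, Finset.mul_sum]
    refine Finset.sum_congr rfl fun t ht => ?_
    have h2 : (if ∀ v ∈ t.biUnion id, ωg v = false then (1:ℝ) else 0) *
        ∏ v, (if ωg v then 1 - Real.exp (-2 * H v) else Real.exp (-2 * H v)) =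
        ∏ v, Fb t v (ωg v) := by
      simp only [hFb]
      rw [Finset.prod_mul_distrib]
      congr 1
      have hb : ∀ v : V, (if v ∈ t.biUnion id then (if ωg v then (0:ℝ) else 1) else 1)
          = (if v ∈ t.biUnion id then (if ωg v = false then (1:ℝ) else 0) else 1) := by
        intro v
        cases h : ωg v <;> simp
      simp only [hb]
      rw [Finset.prod_ite_mem, Finset.univ_inter, Finset.prod_boole]
      congr!
    rw [← h2]
    ring
  rw [Finset.sum_congr rfl (fun ωg _ => key ωg), ← Finset.mul_sum]
  congr 1
  rw [Finset.sum_comm]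
  have inner : ∀ t ∈ K.powerset,
      ∑ ωg : V → Bool, (q - 1) ^ t.card * ∏ v, Fb t v (ωg v) =
        ∏ C ∈ t, ((q - 1) * Real.exp (-2 * ∑ v ∈ C, H v)) := by
    intro t ht
    have hdisj : (↑t : Set (Finset V)).PairwiseDisjoint id :=
      (clusters_disjoint ωi).subset (by
        exact_mod_cast Finset.coe_subset.2 (Finset.mem_powerset.1 ht))
    rw [← Finset.mul_sum, ← Fintype.prod_sum (fun v b => Fb t v b)]
    have hb : ∀ v : V, (∑ b : Bool, Fb t v b) =
        (if v ∈ t.biUnion id then Real.exp (-2 * H v) else 1) := by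
      intro v
      rw [Fintype.sum_bool]
      simp only [hFb]
      by_cases h : v ∈ t.biUnion id <;> simp [h] <;> ring
    rw [Finset.prod_congr rfl (fun v _ => hb v), Finset.prod_ite_mem, Finset.univ_inter]
    have he : ∏ v ∈ t.biUnion id, Real.exp (-2 * H v) =
        ∏ C ∈ t, Real.exp (-2 * ∑ v ∈ C, H v) := by
      rw [← Real.exp_sum, Finset.sum_biUnion hdisj, ← Real.exp_sum]
      congr 1
      refine Finset.sum_congr rfl fun C _ => ?_
      simp only [id]
      rw [Finset.mul_sum]
    rw [he, Finset.prod_mul_distrib, Finset.prod_const]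
  rw [Finset.sum_congr rfl inner]
  have := Finset.prod_add (fun C => (q - 1) * Real.exp (-2 * ∑ v ∈ C, H v))
    (fun _ => (1:ℝ)) K
  simp only [Finset.prod_const_one, mul_one] at this
  rw [← this]
  refine Finset.prod_congr rfl fun C _ => ?_
  ring

lemma factor_eq {q : ℝ} (hq : 0 < q) (h : ℝ) :
    1 + (q - 1) * Real.exp (-2 * h)
      = q * Real.exp (-h) * ((2 / q) * Real.cosh h + ((q - 2) / q) * Real.exp (-h)) := by
  have e2 : Real.exp (-2 * h) = Real.exp (-h) * Real.exp (-h) := by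
    rw [← Real.exp_add]; ring_nf
  rw [Real.cosh_eq, e2]
  have hq' : q ≠ 0 := ne_of_gt hq
  have h3 : Real.exp (-h) * Real.exp h = 1 := by rw [← Real.exp_add]; simp
  field_simp
  nlinarith [h3, sq_nonneg q, sq_nonneg (Real.exp (-h))]

lemma factor_pos {q : ℝ} (hq : 0 < q) {h : ℝ} (hh : 0 ≤ h) :
    0 < (2 / q) * Real.cosh h + ((q - 2) / q) * Real.exp (-h) := by
  have hP : 0 < 1 + (q - 1) * Real.exp (-2 * h) := by
    have h1 : Real.exp (-2 * h) ≤ 1 := Real.exp_le_one_iff.mpr (by linarith)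
    nlinarith [mul_pos hq (Real.exp_pos (-2 * h))]
  have h2 : 0 < q * Real.exp (-h) := by positivity
  rw [factor_eq hq h] at hP
  by_contra hle
  push_neg at hle
  nlinarith

end FK

/-- Radon–Nikodym derivative for the random-cluster model with
general cluster weight `q > 0`. -/
theorem fk_radon_nikodym_general_q
    {V : Type*} [Fintype V] [DecidableEq V]
    (E : Finset (Sym2 V)) (hE : ∀ e ∈ E, ¬ e.IsDiag)
    (J : Sym2 V → ℝ) (hJ : ∀ e ∈ E, 0 ≤ J e)
    (H : V → ℝ) (hH : ∀ v, 0 ≤ H v)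
    (q : ℝ) (hq : 0 < q) :
    ∀ ωi : FK.Config E,
      FK.fkMarginalQ q J H E ωi =
        FK.rcProbQ q J E ωi *
          (∏ C ∈ FK.clusters E ωi,
            ((2 / q) * Real.cosh (∑ v ∈ C, H v) +
              ((q - 2) / q) * Real.exp (-(∑ v ∈ C, H v)))) /
          ∑ ω' : FK.Config E, FK.rcProbQ q J E ω' *
            ∏ C ∈ FK.clusters E ω',
              ((2 / q) * Real.cosh (∑ v ∈ C, H v) +
                ((q - 2) / q) * Real.exp (-(∑ v ∈ C, H v))) := by
  intro ωi
  classical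
  set f : FK.Config E → ℝ := fun ω' => ∏ C ∈ FK.clusters E ω',
    ((2 / q) * Real.cosh (∑ v ∈ C, H v) + ((q - 2) / q) * Real.exp (-(∑ v ∈ C, H v)))
    with hf
  have hfpos : ∀ ω' : FK.Config E, 0 < f ω' := fun ω' =>
    Finset.prod_pos fun C _ => FK.factor_pos hq (Finset.sum_nonneg fun v _ => hH v)
  have hedge : ∀ ω' : FK.Config E, 0 ≤ FK.edgeWeight J E ω' := by
    intro ω'
    refine Finset.prod_nonneg fun e _ => ?_
    split
    · have h1 : Real.exp (-2 * J e.1) ≤ 1 :=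
        Real.exp_le_one_iff.mpr (by nlinarith [hJ e.1 e.2])
      linarith
    · positivity
  have hrc : ∀ ω' : FK.Config E, 0 ≤ FK.rcWeightQ q J E ω' := fun ω' =>
    mul_nonneg (pow_nonneg hq.le _) (hedge ω')
  have hrc0 : 0 < FK.rcWeightQ q J E (fun _ => false) := by
    refine mul_pos (pow_pos hq _) ?_
    unfold FK.edgeWeight
    refine Finset.prod_pos fun e _ => ?_
    simp only [Bool.false_eq_true, if_false]
    positivity
  have hZ : 0 < ∑ ω' : FK.Config E, FK.rcWeightQ q J E ω' :=
    Finset.sum_pos' (fun ω' _ => hrc ω') ⟨fun _ => false, Finset.mem_univ _, hrc0⟩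
  have hD : 0 < ∑ ω' : FK.Config E, FK.rcWeightQ q J E ω' * f ω' :=
    Finset.sum_pos' (fun ω' _ => mul_nonneg (hrc ω') (hfpos ω').le)
      ⟨fun _ => false, Finset.mem_univ _, mul_pos hrc0 (hfpos _)⟩
  set s := ∑ v, H v with hs
  have hkey : ∀ ω' : FK.Config E,
      ∑ ωg : V → Bool, FK.fkWeightQ q J H E (ω', ωg)
        = FK.rcWeightQ q J E ω' * Real.exp (-s) * f ω' := by
    intro ω'
    rw [FK.sum_ghost q J H ω']
    have h1 : ∀ C ∈ FK.clusters E ω',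
        (1 + (q - 1) * Real.exp (-2 * ∑ v ∈ C, H v))
          = q * Real.exp (-(∑ v ∈ C, H v)) *
            ((2 / q) * Real.cosh (∑ v ∈ C, H v) +
              ((q - 2) / q) * Real.exp (-(∑ v ∈ C, H v))) :=
      fun C _ => FK.factor_eq hq _
    rw [Finset.prod_congr rfl h1, Finset.prod_mul_distrib, Finset.prod_mul_distrib,
      Finset.prod_const, ← Real.exp_sum]
    have h2 : ∑ C ∈ FK.clusters E ω', -(∑ v ∈ C, H v) = -s := by
      rw [Finset.sum_neg_distrib, FK.sum_clusters ω' H, hs]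
    rw [h2, hf]
    unfold FK.rcWeightQ
    ring
  have hZfk : ∑ ω' : FK.GConfig E, FK.fkWeightQ q J H E ω'
      = Real.exp (-s) * ∑ ω' : FK.Config E, FK.rcWeightQ q J E ω' * f ω' := by
    rw [Fintype.sum_prod_type, Finset.mul_sum]
    exact Finset.sum_congr rfl fun ω' _ => by rw [hkey ω']; ring
  have hLHS : FK.fkMarginalQ q J H E ωi
      = FK.rcWeightQ q J E ωi * f ωi /
          (∑ ω' : FK.Config E, FK.rcWeightQ q J E ω' * f ω') := by
    unfold FK.fkMarginalQ FK.fkProbQ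
    rw [← Finset.sum_div, hkey, hZfk]
    rw [show FK.rcWeightQ q J E ωi * Real.exp (-s) * f ωi
        = Real.exp (-s) * (FK.rcWeightQ q J E ωi * f ωi) by ring]
    exact mul_div_mul_left _ _ (Real.exp_ne_zero _)
  rw [hLHS]
  unfold FK.rcProbQ
  have hsum : ∑ ω' : FK.Config E,
      FK.rcWeightQ q J E ω' / (∑ ω'' : FK.Config E, FK.rcWeightQ q J E ω'') * f ω'
      = (∑ ω' : FK.Config E, FK.rcWeightQ q J E ω' * f ω') /
          (∑ ω'' : FK.Config E, FK.rcWeightQ q J E ω'') := by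
    rw [Finset.sum_div]
    exact Finset.sum_congr rfl fun ω' _ => by ring
  rw [hsum]
  rw [show (∏ C ∈ FK.clusters E ωi,
      ((2 / q) * Real.cosh (∑ v ∈ C, H v) +
        ((q - 2) / q) * Real.exp (-(∑ v ∈ C, H v)))) = f ωi from rfl]
  have hZne : (∑ ω'' : FK.Config E, FK.rcWeightQ q J E ω'') ≠ 0 := ne_of_gt hZ
  have hDne : (∑ ω' : FK.Config E, FK.rcWeightQ q J E ω' * f ω') ≠ 0 := ne_of_gt hD
  field_simp
end
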